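/- Let U be an ℓ×ℓ complex unitary matrix with spectral decomposition U = Σ_{r=1}^m λ_r F_r. Then for every unit vector x ∈ ℂ^ℓ and every positive integer K, Σ_{j=1}^ℓ | (1/K) Σ_{k=0}^{K-1} x* (U^k)* D_j U^k x − Σ_{r=1}^m x* F_r D_j F_r x | ≤ (2/K) Σ_{r ≠ s} Σ_{j=1}^ℓ √((F_r)_{jj} (F_s)_{jj}) / |λ_r − λ_s|. -/

import Mathlib

open Matrix Filter Finset

lemma cs_dot {n : ℕ} (a b : Fin n → ℂ) :
    ‖(star a ⬝ᵥ b)‖ ≤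
      Real.sqrt ((star a ⬝ᵥ a).re) * Real.sqrt ((star b ⬝ᵥ b).re) := by
  let a' : EuclideanSpace ℂ (Fin n) := (WithLp.equiv 2 _).symm a
  let b' : EuclideanSpace ℂ (Fin n) := (WithLp.equiv 2 _).symm b
  have h1 : star a ⬝ᵥ b = inner ℂ a' b' := (dotProduct_comm _ _).trans (EuclideanSpace.inner_toLp_toLp a b).symm
  have h2 : star a ⬝ᵥ a = inner ℂ a' a' := (dotProduct_comm _ _).trans (EuclideanSpace.inner_toLp_toLp a a).symm
  have h3 : star b ⬝ᵥ b = inner ℂ b' b' := (dotProduct_comm _ _).trans (EuclideanSpace.inner_toLp_toLp b b).symm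
  rw [h1, h2, h3]
  calc ‖inner ℂ a' b'‖ = ‖(inner ℂ a' b' : ℂ)‖ := rfl
    _ ≤ ‖a'‖ * ‖b'‖ := norm_inner_le_norm a' b'
    _ = Real.sqrt ((inner ℂ a' a' : ℂ).re) * Real.sqrt ((inner ℂ b' b' : ℂ).re) := by
        rw [@norm_eq_sqrt_re_inner ℂ, @norm_eq_sqrt_re_inner ℂ]; rfl

lemma re_star_dot_nonneg {n : ℕ} (v : Fin n → ℂ) : 0 ≤ (star v ⬝ᵥ v).re := by
  simp only [dotProduct, Pi.star_apply, Complex.re_sum]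
  refine Finset.sum_nonneg fun i _ => ?_
  have h : star (v i) * v i = (Complex.normSq (v i) : ℂ) := by
    rw [mul_comm]; exact Complex.mul_conj _
  rw [h]
  exact_mod_cast Complex.normSq_nonneg _

lemma std_sandwich_entry {n : ℕ} (A B : Matrix (Fin n) (Fin n) ℂ) (j a b : Fin n) :
    (A * Matrix.single j j (1:ℂ) * B) a b = A a j * B j b := by
  rw [Matrix.mul_apply, Finset.sum_eq_single j]
  · rw [Matrix.mul_single_apply_same, mul_one]
  · intro d _ hd
    simp [hd]
  · simp

lemma std_sandwich_dot {n : ℕ} (A B : Matrix (Fin n) (Fin n) ℂ) (j : Fin n) (x : Fin n → ℂ) :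
    star x ⬝ᵥ ((A * Matrix.single j j (1:ℂ) * B) *ᵥ x)
      = (∑ a, star (x a) * A a j) * ((B *ᵥ x) j) := by
  simp only [dotProduct, mulVec, Pi.star_apply, std_sandwich_entry, dotProduct]
  rw [Finset.sum_mul]
  refine Finset.sum_congr rfl fun a _ => ?_
  rw [Finset.mul_sum, Finset.mul_sum]
  refine Finset.sum_congr rfl fun b _ => ?_
  ring

lemma triple_swap {β γ δ M : Type*} [AddCommMonoid M] (s1 : Finset β) (s2 : Finset γ)
    (s3 : Finset δ) (f : β → γ → δ → M) :
    ∑ k ∈ s1, ∑ r ∈ s2, ∑ s ∈ s3, f k r s = ∑ r ∈ s2, ∑ s ∈ s3, ∑ k ∈ s1, f k r s := by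
  rw [Finset.sum_comm]
  exact Finset.sum_congr rfl fun _ _ => Finset.sum_comm

lemma abs_star_complex (z : ℂ) : ‖star z‖ = ‖z‖ := Complex.norm_conj z


/-- For a unitary `U` with spectral decomposition `U = ∑ r, λ r • F r`,
a unit vector `x`, and a positive integer `K`, the total deviation of the `K`-step
average arc probabilities from the limiting probabilities is at most
`(2/K) ∑_{r ≠ s} ∑_j √((F_r)_jj (F_s)_jj) / |λ_r − λ_s|`. -/
theorem avg_prob_deviation_bound (ℓ m : ℕ) (hℓ : 0 < ℓ)
    (U : Matrix (Fin ℓ) (Fin ℓ) ℂ)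
    (hU : U ∈ Matrix.unitaryGroup (Fin ℓ) ℂ)
    (lam : Fin m → ℂ) (F : Fin m → Matrix (Fin ℓ) (Fin ℓ) ℂ)
    (hdist : Function.Injective lam)
    (hmod : ∀ r, ‖lam r‖ = 1)
    (hherm : ∀ r, (F r)ᴴ = F r)
    (hidem : ∀ r, F r * F r = F r)
    (horth : ∀ r s, r ≠ s → F r * F s = 0)
    (hsum : ∑ r, F r = 1)
    (hspec : U = ∑ r, lam r • F r)
    (x : Fin ℓ → ℂ) (hx : star x ⬝ᵥ x = 1)
    (K : ℕ) (hK : 0 < K) :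
    ∑ j : Fin ℓ,
      ‖
        ((K : ℂ)⁻¹ *
            ∑ k ∈ Finset.range K,
              star x ⬝ᵥ (((U ^ k)ᴴ * Matrix.single j j 1 * U ^ k) *ᵥ x) -
          ∑ r, star x ⬝ᵥ ((F r * Matrix.single j j 1 * F r) *ᵥ x))‖ ≤
      (2 / (K : ℝ)) *
        ∑ r, ∑ s,
          if r ≠ s then
            ∑ j : Fin ℓ,
              Real.sqrt ((F r j j).re * (F s j j).re) / ‖lam r - lam s‖
          else 0 := by
  classical
  have hKc : (K : ℂ) ≠ 0 := Nat.cast_ne_zero.mpr hK.ne'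
  -- powers of U
  have hpow : ∀ k : ℕ, U ^ k = ∑ r, lam r ^ k • F r := by
    intro k
    induction k with
    | zero => simp [hsum]
    | succ k ih =>
      rw [pow_succ, ih, hspec, Finset.sum_mul]
      refine Finset.sum_congr rfl fun r _ => ?_
      rw [Finset.mul_sum, Finset.sum_eq_single r]
      · rw [smul_mul_smul_comm, hidem, ← pow_succ]
      · intro s _ hs
        rw [smul_mul_smul_comm, horth r s (Ne.symm hs), smul_zero]
      · simp
  have hpowH : ∀ k : ℕ, (U ^ k)ᴴ = ∑ r, (star (lam r)) ^ k • F r := by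
    intro k
    rw [hpow k, Matrix.conjTranspose_sum]
    refine Finset.sum_congr rfl fun r _ => ?_
    rw [Matrix.conjTranspose_smul, hherm, star_pow]
  -- unimodularity facts
  have hμone : ∀ r, star (lam r) * lam r = 1 := by
    intro r
    rw [mul_comm]
    have h1 : lam r * star (lam r) = (Complex.normSq (lam r) : ℂ) := Complex.mul_conj _
    rw [h1, Complex.normSq_eq_norm_sq, hmod r]
    norm_num
  -- hermitian entries
  have hFentry : ∀ r (a j : Fin ℓ), star (F r j a) = F r a j := by
    intro r a j
    rw [← Matrix.conjTranspose_apply, hherm]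
  -- conjugate row sum
  have hstar_u : ∀ r (j : Fin ℓ), (∑ a, star (x a) * F r a j) = star ((F r *ᵥ x) j) := by
    intro r j
    have h : (F r *ᵥ x) j = ∑ a, F r j a * x a := rfl
    rw [h, star_sum]
    refine Finset.sum_congr rfl fun a _ => ?_
    rw [star_mul', hFentry]
    exact mul_comm _ _
  -- sandwich with F's
  have hcu : ∀ r s (j : Fin ℓ),
      star x ⬝ᵥ ((F r * Matrix.single j j 1 * F s) *ᵥ x)
        = star ((F r *ᵥ x) j) * ((F s *ᵥ x) j) := by
    intro r s j
    rw [std_sandwich_dot, hstar_u]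
  -- row/col expansions for sums of matrices
  have hrow : ∀ (c : Fin m → ℂ) (j : Fin ℓ),
      (∑ a, star (x a) * (∑ r, c r • F r) a j) = ∑ r, c r * star ((F r *ᵥ x) j) := by
    intro c j
    simp only [Matrix.sum_apply, Matrix.smul_apply, smul_eq_mul, Finset.mul_sum]
    rw [Finset.sum_comm]
    refine Finset.sum_congr rfl fun r _ => ?_
    rw [← hstar_u r j, Finset.mul_sum]
    refine Finset.sum_congr rfl fun a _ => by ring
  have hmv : ∀ (b : Fin m → ℂ) (j : Fin ℓ),
      ((∑ s, b s • F s) *ᵥ x) j = ∑ s, b s * ((F s *ᵥ x) j) := by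
    intro b j
    simp only [mulVec, dotProduct, Matrix.sum_apply, Matrix.smul_apply, smul_eq_mul,
      Finset.sum_mul]
    rw [Finset.sum_comm]
    refine Finset.sum_congr rfl fun s _ => ?_
    rw [Finset.mul_sum]
    refine Finset.sum_congr rfl fun a _ => by ring
  -- expansion of the k-step quadratic form
  have hUkD : ∀ (k : ℕ) (j : Fin ℓ),
      star x ⬝ᵥ (((U ^ k)ᴴ * Matrix.single j j 1 * U ^ k) *ᵥ x)
        = ∑ r, ∑ s, (star (lam r) * lam s) ^ k
            * (star ((F r *ᵥ x) j) * ((F s *ᵥ x) j)) := by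
    intro k j
    rw [hpowH k, hpow k, std_sandwich_dot, hrow, hmv, Finset.sum_mul_sum]
    refine Finset.sum_congr rfl fun r _ => Finset.sum_congr rfl fun s _ => ?_
    rw [mul_pow]
    ring
  -- the averaged coefficients
  set g : Fin m → Fin m → ℂ :=
    fun r s => (K : ℂ)⁻¹ * ∑ k ∈ Finset.range K, (star (lam r) * lam s) ^ k with hgdef
  have hgrr : ∀ r, g r r = 1 := by
    intro r
    simp only [hgdef, hμone r, one_pow, Finset.sum_const, Finset.card_range, nsmul_eq_mul,
      mul_one]
    exact inv_mul_cancel₀ hKc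
  -- per-j identity
  have hEj : ∀ j : Fin ℓ,
      ((K : ℂ)⁻¹ *
            ∑ k ∈ Finset.range K,
              star x ⬝ᵥ (((U ^ k)ᴴ * Matrix.single j j 1 * U ^ k) *ᵥ x) -
          ∑ r, star x ⬝ᵥ ((F r * Matrix.single j j 1 * F r) *ᵥ x))
        = ∑ r, ∑ s, (if r = s then 0
            else g r s * (star ((F r *ᵥ x) j) * ((F s *ᵥ x) j))) := by
    intro j
    have e1 : (∑ k ∈ Finset.range K,
        star x ⬝ᵥ (((U ^ k)ᴴ * Matrix.single j j 1 * U ^ k) *ᵥ x))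
        = ∑ r, ∑ s, ∑ k ∈ Finset.range K,
            (star (lam r) * lam s) ^ k * (star ((F r *ᵥ x) j) * ((F s *ᵥ x) j)) := by
      rw [Finset.sum_congr rfl fun k _ => hUkD k j]
      exact triple_swap _ _ _ _
    have e2 : (K : ℂ)⁻¹ *
        (∑ r, ∑ s, ∑ k ∈ Finset.range K,
            (star (lam r) * lam s) ^ k * (star ((F r *ᵥ x) j) * ((F s *ᵥ x) j)))
        = ∑ r, ∑ s, g r s * (star ((F r *ᵥ x) j) * ((F s *ᵥ x) j)) := by
      rw [Finset.mul_sum]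
      refine Finset.sum_congr rfl fun r _ => ?_
      rw [Finset.mul_sum]
      refine Finset.sum_congr rfl fun s _ => ?_
      rw [← Finset.sum_mul, hgdef, ← mul_assoc]
    have e3 : (∑ r, star x ⬝ᵥ ((F r * Matrix.single j j 1 * F r) *ᵥ x))
        = ∑ r, ∑ s, (if r = s then star ((F r *ᵥ x) j) * ((F s *ᵥ x) j) else 0) := by
      refine Finset.sum_congr rfl fun r _ => ?_
      rw [hcu r r j, Finset.sum_ite_eq univ r
        (fun s => star ((F r *ᵥ x) j) * ((F s *ᵥ x) j)), if_pos (Finset.mem_univ r)]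
    rw [e1, e2, e3, ← Finset.sum_sub_distrib]
    refine Finset.sum_congr rfl fun r _ => ?_
    rw [← Finset.sum_sub_distrib]
    refine Finset.sum_congr rfl fun s _ => ?_
    by_cases h : r = s
    · subst h
      rw [if_pos rfl, if_pos rfl, hgrr r, one_mul, sub_self]
    · rw [if_neg h, if_neg h, sub_zero]
  -- positivity of diagonal entries and column norms
  have hww : ∀ r (j : Fin ℓ), (star (fun a => F r a j) ⬝ᵥ (fun a => F r a j)) = F r j j := by
    intro r j
    simp only [dotProduct, Pi.star_apply]
    have h : ∀ a, star (F r a j) * F r a j = F r j a * F r a j := fun a => by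
      rw [hFentry r j a]
    rw [Finset.sum_congr rfl fun a _ => h a, ← Matrix.mul_apply, hidem]
  have hFre : ∀ r (j : Fin ℓ), 0 ≤ (F r j j).re := by
    intro r j
    have := re_star_dot_nonneg (fun a => F r a j)
    rwa [hww r j] at this
  -- quadratic forms of projections
  have hquad : ∀ r, star (F r *ᵥ x) ⬝ᵥ (F r *ᵥ x) = star x ⬝ᵥ (F r *ᵥ x) := by
    intro r
    rw [Matrix.star_mulVec, ← Matrix.dotProduct_mulVec, Matrix.mulVec_mulVec, hherm, hidem]
  have hsum1 : ∑ r, star x ⬝ᵥ (F r *ᵥ x) = 1 := by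
    have hmv2 : ∀ a, ((∑ r, F r) *ᵥ x) a = ∑ r, (F r *ᵥ x) a := by
      intro a
      simp only [mulVec, dotProduct, Matrix.sum_apply, Finset.sum_mul]
      exact Finset.sum_comm
    have h : ∑ r, star x ⬝ᵥ (F r *ᵥ x) = star x ⬝ᵥ ((∑ r, F r) *ᵥ x) := by
      calc ∑ r, star x ⬝ᵥ (F r *ᵥ x) = ∑ r, ∑ a, star (x a) * (F r *ᵥ x) a := rfl
        _ = ∑ a, ∑ r, star (x a) * (F r *ᵥ x) a := Finset.sum_comm
        _ = ∑ a, star (x a) * ((∑ r, F r) *ᵥ x) a := by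
            refine Finset.sum_congr rfl fun a _ => ?_
            rw [hmv2 a, Finset.mul_sum]
        _ = star x ⬝ᵥ ((∑ r, F r) *ᵥ x) := rfl
    rw [h, hsum, Matrix.one_mulVec, hx]
  have hquad_le : ∀ r, (star (F r *ᵥ x) ⬝ᵥ (F r *ᵥ x)).re ≤ 1 := by
    intro r
    have h1 : ∑ r', (star (F r' *ᵥ x) ⬝ᵥ (F r' *ᵥ x)).re = 1 := by
      rw [← Complex.re_sum, Finset.sum_congr rfl fun r' _ => hquad r', hsum1, Complex.one_re]
    calc (star (F r *ᵥ x) ⬝ᵥ (F r *ᵥ x)).re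
        ≤ ∑ r', (star (F r' *ᵥ x) ⬝ᵥ (F r' *ᵥ x)).re :=
          Finset.single_le_sum (fun r' _ => re_star_dot_nonneg (F r' *ᵥ x)) (Finset.mem_univ r)
      _ = 1 := h1
  -- entrywise bound on projections of x
  have hub : ∀ r (j : Fin ℓ), ‖((F r *ᵥ x) j)‖ ≤ Real.sqrt ((F r j j).re) := by
    intro r j
    have hdot1 : star (fun a => F r a j) ⬝ᵥ (F r *ᵥ x) = (F r *ᵥ x) j := by
      simp only [dotProduct, Pi.star_apply]
      have h : ∀ a, star (F r a j) * (F r *ᵥ x) a = F r j a * (F r *ᵥ x) a := fun a => by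
        rw [hFentry r j a]
      rw [Finset.sum_congr rfl fun a _ => h a]
      have h2 : ∑ a, F r j a * (F r *ᵥ x) a = (F r *ᵥ (F r *ᵥ x)) j := rfl
      rw [h2, Matrix.mulVec_mulVec, hidem]
    have hcs := cs_dot (fun a => F r a j) (F r *ᵥ x)
    rw [hdot1, hww r j] at hcs
    calc ‖((F r *ᵥ x) j)‖
        ≤ Real.sqrt ((F r j j).re) * Real.sqrt ((star (F r *ᵥ x) ⬝ᵥ (F r *ᵥ x)).re) := hcs
      _ ≤ Real.sqrt ((F r j j).re) * 1 := by
          refine mul_le_mul_of_nonneg_left ?_ (Real.sqrt_nonneg _)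
          exact Real.sqrt_le_one.mpr (hquad_le r)
      _ = Real.sqrt ((F r j j).re) := mul_one _
  have hcb : ∀ r s (j : Fin ℓ),
      ‖(star ((F r *ᵥ x) j) * ((F s *ᵥ x) j))‖
        ≤ Real.sqrt ((F r j j).re * (F s j j).re) := by
    intro r s j
    rw [norm_mul, abs_star_complex, Real.sqrt_mul (hFre r j)]
    exact mul_le_mul (hub r j) (hub s j) (norm_nonneg _) (Real.sqrt_nonneg _)
  -- bound on the averaged coefficients
  have hgb : ∀ r s, r ≠ s →
      ‖(g r s)‖ ≤ (K : ℝ)⁻¹ * (2 / ‖(lam r - lam s)‖) := by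
    intro r s hrs
    have hlam_ne : lam r - lam s ≠ 0 := sub_ne_zero.mpr fun h => hrs (hdist h)
    have habs_pos : 0 < ‖(lam r - lam s)‖ := norm_pos_iff.mpr hlam_ne
    have hμabs : ‖(star (lam r) * lam s)‖ = 1 := by
      rw [norm_mul, abs_star_complex, hmod r, hmod s, one_mul]
    have hμsub : ‖(star (lam r) * lam s - 1)‖
        = ‖(lam r - lam s)‖ := by
      have h : star (lam r) * lam s - 1 = star (lam r) * (lam s - lam r) := by
        rw [mul_sub, hμone r]
      rw [h, norm_mul, abs_star_complex, hmod r, one_mul]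
      exact norm_sub_rev _ _
    have hgeom : (∑ k ∈ Finset.range K, (star (lam r) * lam s) ^ k)
        * ((star (lam r) * lam s) - 1) = (star (lam r) * lam s) ^ K - 1 :=
      geom_sum_mul _ K
    have hsum_bound : ‖(∑ k ∈ Finset.range K, (star (lam r) * lam s) ^ k)‖
        ≤ 2 / ‖(lam r - lam s)‖ := by
      rw [le_div_iff₀ habs_pos]
      calc ‖(∑ k ∈ Finset.range K, (star (lam r) * lam s) ^ k)‖
            * ‖(lam r - lam s)‖
          = ‖((∑ k ∈ Finset.range K, (star (lam r) * lam s) ^ k)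
            * ((star (lam r) * lam s) - 1))‖ := by rw [norm_mul, hμsub]
        _ = ‖((star (lam r) * lam s) ^ K - 1)‖ := by rw [hgeom]
        _ ≤ ‖((star (lam r) * lam s) ^ K)‖ + ‖(1:ℂ)‖ := by
            exact norm_sub_le _ _
        _ = 2 := by rw [norm_pow, hμabs, one_pow, norm_one]; norm_num
    have habsg : ‖(g r s)‖
        = (K : ℝ)⁻¹ * ‖(∑ k ∈ Finset.range K, (star (lam r) * lam s) ^ k)‖ := by
      rw [hgdef]
      simp only
      rw [norm_mul, norm_inv, Complex.norm_natCast]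
    rw [habsg]
    exact mul_le_mul_of_nonneg_left hsum_bound (inv_nonneg.mpr (Nat.cast_nonneg K))
  -- per-j absolute bound
  have hstep : ∀ j : Fin ℓ,
      ‖((K : ℂ)⁻¹ *
            ∑ k ∈ Finset.range K,
              star x ⬝ᵥ (((U ^ k)ᴴ * Matrix.single j j 1 * U ^ k) *ᵥ x) -
          ∑ r, star x ⬝ᵥ ((F r * Matrix.single j j 1 * F r) *ᵥ x))‖
        ≤ ∑ r, ∑ s, (if r = s then (0 : ℝ)
            else ((K : ℝ)⁻¹ * (2 / ‖(lam r - lam s)‖))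
              * Real.sqrt ((F r j j).re * (F s j j).re)) := by
    intro j
    rw [hEj j]
    calc ‖(∑ r, ∑ s, (if r = s then 0
            else g r s * (star ((F r *ᵥ x) j) * ((F s *ᵥ x) j))))‖
        ≤ ∑ r, ‖(∑ s, (if r = s then 0
            else g r s * (star ((F r *ᵥ x) j) * ((F s *ᵥ x) j))))‖ :=
          norm_sum_le _ _
      _ ≤ ∑ r, ∑ s, ‖(if r = s then 0
            else g r s * (star ((F r *ᵥ x) j) * ((F s *ᵥ x) j)))‖ :=
          Finset.sum_le_sum fun r _ => norm_sum_le _ _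
      _ ≤ ∑ r, ∑ s, (if r = s then (0 : ℝ)
            else ((K : ℝ)⁻¹ * (2 / ‖(lam r - lam s)‖))
              * Real.sqrt ((F r j j).re * (F s j j).re)) := by
          refine Finset.sum_le_sum fun r _ => Finset.sum_le_sum fun s _ => ?_
          by_cases h : r = s
          · simp [h]
          · rw [if_neg h, if_neg h, norm_mul]
            refine mul_le_mul (hgb r s h) (hcb r s j) (norm_nonneg _) ?_
            positivity
  -- assemble
  calc ∑ j : Fin ℓ,
      ‖((K : ℂ)⁻¹ *
            ∑ k ∈ Finset.range K,
              star x ⬝ᵥ (((U ^ k)ᴴ * Matrix.single j j 1 * U ^ k) *ᵥ x) -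
          ∑ r, star x ⬝ᵥ ((F r * Matrix.single j j 1 * F r) *ᵥ x))‖
      ≤ ∑ j : Fin ℓ, ∑ r, ∑ s, (if r = s then (0 : ℝ)
            else ((K : ℝ)⁻¹ * (2 / ‖(lam r - lam s)‖))
              * Real.sqrt ((F r j j).re * (F s j j).re)) :=
        Finset.sum_le_sum fun j _ => hstep j
    _ = (2 / (K : ℝ)) *
        ∑ r, ∑ s,
          if r ≠ s then
            ∑ j : Fin ℓ,
              Real.sqrt ((F r j j).re * (F s j j).re) / ‖(lam r - lam s)‖
          else 0 := by
        rw [triple_swap, Finset.mul_sum]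
        refine Finset.sum_congr rfl fun r _ => ?_
        rw [Finset.mul_sum]
        refine Finset.sum_congr rfl fun s _ => ?_
        by_cases h : r = s
        · simp [h]
        · simp only [if_neg h, if_pos h, Finset.mul_sum]
          refine Finset.sum_congr rfl fun j _ => ?_
          ring
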